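/- Let q be an odd prime and k ≥ 1 an integer; put r = gcd(k, q−1), and for each prime p ≠ q let g_p be the multiplicative order of p^r modulo q and μ_p := q if g_p = 1, μ_p := g_p if g_p > 1. Then for every complex s with Re(s) > 1, ∑_{n ≥ 1, q ∤ σ_k(n)} n^{−s} = (1−q^{−s})^{−1} · ∏_{p ≠ q} (1−p^{−(μ_p−1)s}) / ((1−p^{−s})(1−p^{−μ_p·s})), both sides converging absolutely. -/

import Mathlib

open Filter Topology

/-- The `k`-th divisor sum function `σ_k(n) = ∑_{d ∣ n} d^k`. -/
def sigmak (k n : ℕ) : ℕ := ∑ d ∈ n.divisors, d ^ k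

/-- The multiplicative order `g_p` of `p^m` modulo `q`. -/
noncomputable def gp (q m p : ℕ) : ℕ := orderOf ((p : ZMod q) ^ m)

/-- `μ_p = q` if `g_p = 1` and `μ_p = g_p` otherwise. -/
noncomputable def mup (q m p : ℕ) : ℕ := if gp q m p = 1 then q else gp q m p


/-- The Euler factor at `p ≠ q` of the Dirichlet series `T(s) = ∑_{q ∤ σ_k(n)} n^{−s}`. -/
noncomputable def Tfactor (q r : ℕ) (s : ℂ) (p : ℕ) : ℂ :=
  if p = q then 1 else
    (1 - (p : ℂ) ^ (-(((mup q r p - 1 : ℕ) : ℂ) * s))) /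
      ((1 - (p : ℂ) ^ (-s)) * (1 - (p : ℂ) ^ (-((mup q r p : ℕ) * s : ℂ))))

open Complex

lemma sigmak_eq (k n : ℕ) : sigmak k n = ArithmeticFunction.sigma k n := by
  rw [ArithmeticFunction.sigma_apply]; rfl

lemma sigmak_prime_pow {k p : ℕ} (hp : p.Prime) (e : ℕ) :
    sigmak k (p ^ e) = ∑ j ∈ Finset.range (e + 1), p ^ (j * k) := by
  rw [sigmak_eq, ArithmeticFunction.sigma_apply_prime_pow hp]

lemma cast_sigmak_prime_pow {q k p : ℕ} (hp : p.Prime) (e : ℕ) :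
    ((sigmak k (p ^ e) : ℕ) : ZMod q) =
      ∑ j ∈ Finset.range (e + 1), ((p : ZMod q) ^ k) ^ j := by
  rw [sigmak_prime_pow hp]
  push_cast
  refine Finset.sum_congr rfl fun j _ => ?_
  rw [← pow_mul, mul_comm]

lemma not_dvd_sigmak_self_pow {q k : ℕ} (hq : q.Prime) (hk : 1 ≤ k) (e : ℕ) :
    ¬ q ∣ sigmak k (q ^ e) := by
  haveI : Fact q.Prime := ⟨hq⟩
  rw [← ZMod.natCast_eq_zero_iff, cast_sigmak_prime_pow hq]
  rw [ZMod.natCast_self, zero_pow (by omega : k ≠ 0)]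
  have : ∀ j ∈ Finset.range (e + 1), (0 : ZMod q) ^ j = if j = 0 then 1 else 0 := by
    intro j _; rcases Nat.eq_zero_or_pos j with h | h
    · simp [h]
    · simp [Nat.pos_iff_ne_zero.mp h, zero_pow]
  rw [Finset.sum_congr rfl this, Finset.sum_ite_eq' (Finset.range (e + 1)) 0 (fun _ => 1)]
  simp

lemma natCast_zmod_prime_ne_zero {q p : ℕ} (hq : q.Prime) (hp : p.Prime) (hne : p ≠ q) :
    (p : ZMod q) ≠ 0 := by
  rw [Ne, ZMod.natCast_eq_zero_iff]
  exact fun h => hne ((Nat.prime_dvd_prime_iff_eq hq hp).mp h).symm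

lemma gp_eq_gp_gcd {q k p : ℕ} (hq : q.Prime) (hk : 1 ≤ k) (hp : p.Prime) (hne : p ≠ q) :
    gp q k p = gp q (Nat.gcd k (q - 1)) p := by
  haveI : Fact q.Prime := ⟨hq⟩
  have hp0 : (p : ZMod q) ≠ 0 := natCast_zmod_prime_ne_zero hq hp hne
  have hd : orderOf (p : ZMod q) ∣ q - 1 :=
    orderOf_dvd_of_pow_eq_one (ZMod.pow_card_sub_one_eq_one hp0)
  have hr : Nat.gcd k (q - 1) ≠ 0 := by
    have := Nat.gcd_pos_of_pos_left (q - 1) (by omega : 0 < k)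
    omega
  unfold gp
  rw [orderOf_pow' _ (by omega : k ≠ 0), orderOf_pow' _ hr]
  congr 1
  refine Nat.dvd_antisymm ?_ ?_
  · exact Nat.dvd_gcd (Nat.gcd_dvd_left _ _)
      (Nat.dvd_gcd (Nat.gcd_dvd_right _ _) ((Nat.gcd_dvd_left _ _).trans hd))
  · exact Nat.dvd_gcd (Nat.gcd_dvd_left _ _)
      ((Nat.gcd_dvd_right _ _).trans (Nat.gcd_dvd_left _ _))

lemma dvd_sigmak_prime_pow_iff {q k p : ℕ} (hq : q.Prime) (hk : 1 ≤ k) (hp : p.Prime)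
    (hne : p ≠ q) (e : ℕ) :
    q ∣ sigmak k (p ^ e) ↔ mup q (Nat.gcd k (q - 1)) p ∣ (e + 1) := by
  haveI : Fact q.Prime := ⟨hq⟩
  have hg : gp q (Nat.gcd k (q - 1)) p = orderOf ((p : ZMod q) ^ k) :=
    (gp_eq_gp_gcd hq hk hp hne).symm
  rw [← ZMod.natCast_eq_zero_iff, cast_sigmak_prime_pow hp]
  set t : ZMod q := (p : ZMod q) ^ k with ht
  by_cases h1 : t = 1
  · have hgp1 : gp q (Nat.gcd k (q - 1)) p = 1 := by
      rw [hg, h1, orderOf_one]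
    rw [mup, if_pos hgp1]
    have : ∑ j ∈ Finset.range (e + 1), t ^ j = ((e + 1 : ℕ) : ZMod q) := by
      simp [h1]
    rw [this, ZMod.natCast_eq_zero_iff]
  · have hgp1 : gp q (Nat.gcd k (q - 1)) p ≠ 1 := by
      rw [hg, Ne, orderOf_eq_one_iff]; exact h1
    rw [mup, if_neg hgp1, hg]
    rw [geom_sum_eq h1]
    rw [div_eq_zero_iff]
    have ht1 : t - 1 ≠ 0 := sub_ne_zero_of_ne h1
    simp only [ht1, or_false, sub_eq_zero]
    exact orderOf_dvd_iff_pow_eq_one.symm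

lemma two_le_mup {q k p : ℕ} (hq : q.Prime) (hq_odd : q ≠ 2) (hk : 1 ≤ k) (hp : p.Prime)
    (hne : p ≠ q) : 2 ≤ mup q (Nat.gcd k (q - 1)) p := by
  haveI : Fact q.Prime := ⟨hq⟩
  have hq3 : 3 ≤ q := by have := hq.two_le; omega
  have hp0 : (p : ZMod q) ≠ 0 := natCast_zmod_prime_ne_zero hq hp hne
  have hpow : ((p : ZMod q) ^ Nat.gcd k (q - 1)) ^ (q - 1) = 1 := by
    rw [← pow_mul, mul_comm, pow_mul, ZMod.pow_card_sub_one_eq_one hp0, one_pow]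
  have hdvd : gp q (Nat.gcd k (q - 1)) p ∣ q - 1 := orderOf_dvd_of_pow_eq_one hpow
  have hpos : 1 ≤ gp q (Nat.gcd k (q - 1)) p := by
    rcases Nat.eq_zero_or_pos (gp q (Nat.gcd k (q - 1)) p) with h | h
    · rw [h] at hdvd
      have := Nat.eq_zero_of_zero_dvd hdvd
      omega
    · exact h
  unfold mup
  split
  · omega
  · omega

lemma local_factor_sum {y : ℂ} (hy : ‖y‖ < 1) {μ : ℕ} (hμ : 2 ≤ μ) :
    Summable (fun e : ℕ => if μ ∣ e + 1 then (0 : ℂ) else y ^ e) ∧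
    ∑' e : ℕ, (if μ ∣ e + 1 then (0 : ℂ) else y ^ e)
      = (1 - y ^ (μ - 1)) / ((1 - y) * (1 - y ^ μ)) := by
  have hyμ : ‖y ^ μ‖ < 1 := by
    rw [norm_pow]
    exact pow_lt_one₀ (norm_nonneg y) hy (by omega)
  have hgeo : Summable (fun e : ℕ => ‖y‖ ^ e) :=
    summable_geometric_of_lt_one (norm_nonneg y) hy
  set g : ℕ → ℂ := fun e => if μ ∣ e + 1 then y ^ e else 0 with hgdef
  have hg : Summable g := by
    refine Summable.of_norm_bounded hgeo fun e => ?_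
    simp only [hgdef]
    split
    · rw [norm_pow]
    · simp [pow_nonneg (norm_nonneg y)]
  have hy' : Summable (fun e : ℕ => y ^ e) := summable_geometric_of_norm_lt_one hy
  have hfun : (fun e : ℕ => if μ ∣ e + 1 then (0 : ℂ) else y ^ e)
      = fun e => y ^ e - g e := by
    funext e
    by_cases h : μ ∣ e + 1 <;> simp [hgdef, h]
  have hμ1 : 1 ≤ μ := by omega
  set i : ℕ → ℕ := fun m => μ * m + (μ - 1) with hidef
  have hinj : Function.Injective i := by
    intro a b h
    simp only [hidef] at h
    exact Nat.eq_of_mul_eq_mul_left (by omega) (Nat.add_right_cancel h)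
  have hsupp : Function.support g ⊆ Set.range i := by
    intro e he
    have hdvd : μ ∣ e + 1 := by
      by_contra h
      exact he (by simp [hgdef, h])
    obtain ⟨c, hc⟩ := hdvd
    have hc0 : c ≠ 0 := by rintro rfl; omega
    obtain ⟨c', rfl⟩ := Nat.exists_eq_succ_of_ne_zero hc0
    refine ⟨c', ?_⟩
    simp only [hidef]
    rw [Nat.mul_succ] at hc
    set X := μ * c' with hX
    omega
  have hcomp : ∀ m : ℕ, g (i m) = y ^ (μ - 1) * (y ^ μ) ^ m := by
    intro m
    have hdvd : μ ∣ i m + 1 := ⟨m + 1, by simp only [hidef]; rw [Nat.mul_succ]; omega⟩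
    simp only [hgdef, hidef] at hdvd ⊢
    rw [if_pos hdvd, pow_add, ← pow_mul, mul_comm]
  have htg : ∑' e, g e = y ^ (μ - 1) * (1 - y ^ μ)⁻¹ := by
    rw [← hinj.tsum_eq hsupp]
    simp_rw [hcomp]
    rw [tsum_mul_left, tsum_geometric_of_norm_lt_one hyμ]
  constructor
  · rw [hfun]; exact hy'.sub hg
  · rw [hfun, hy'.tsum_sub hg, tsum_geometric_of_norm_lt_one hy, htg]
    obtain ⟨ν, rfl⟩ : ∃ ν, μ = ν + 1 := ⟨μ - 1, by omega⟩
    have h1 : 1 - y ≠ 0 := by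
      intro h
      rw [sub_eq_zero] at h
      rw [← h] at hy; simp at hy
    have h2 : 1 - y ^ (ν + 1) ≠ 0 := by
      intro h
      rw [sub_eq_zero] at h
      rw [← h] at hyμ; simp at hyμ
    simp only [Nat.add_sub_cancel]
    field_simp
    ring

/-- For `q` an odd prime, `k ≥ 1`, `r = gcd(k, q−1)`, and `Re(s) > 1`:
`∑_{n ≥ 1, q ∤ σ_k(n)} n^{−s}
  = (1−q^{−s})^{−1} ∏_{p ≠ q} (1−p^{−(μ_p−1)s}) / ((1−p^{−s})(1−p^{−μ_p s}))`,
both sides converging absolutely. -/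
theorem statement9 (q k : ℕ) (hq : q.Prime) (hq_odd : q ≠ 2) (hk : 1 ≤ k)
    (s : ℂ) (hs : 1 < s.re) :
    Summable (fun n : ℕ => if 1 ≤ n ∧ ¬ q ∣ sigmak k n then (n : ℂ) ^ (-s) else 0) ∧
    Multipliable (fun p : Nat.Primes => Tfactor q (Nat.gcd k (q - 1)) s (p : ℕ)) ∧
    (∑' n : ℕ, if 1 ≤ n ∧ ¬ q ∣ sigmak k n then (n : ℂ) ^ (-s) else 0) =
      (1 - (q : ℂ) ^ (-s))⁻¹ *
        ∏' p : Nat.Primes, Tfactor q (Nat.gcd k (q - 1)) s (p : ℕ) := by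
  have hs0 : s ≠ 0 := ne_zero_of_one_lt_re hs
  set r := Nat.gcd k (q - 1) with hr
  set f : ℕ → ℂ := fun n => if 1 ≤ n ∧ ¬ q ∣ sigmak k n then (n : ℂ) ^ (-s) else 0 with hf
  have hf0 : f 0 = 0 := by simp [hf]
  have hf1 : f 1 = 1 := by
    simp [hf, sigmak, Nat.dvd_one, hq.ne_one, Complex.one_cpow]
  have hmul : ∀ {m n : ℕ}, Nat.Coprime m n → f (m * n) = f m * f n := by
    intro m n hcop
    rcases Nat.eq_zero_or_pos m with rfl | hm
    · simp [hf]
    rcases Nat.eq_zero_or_pos n with rfl | hn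
    · simp [hf]
    have hσ : sigmak k (m * n) = sigmak k m * sigmak k n := by
      simp only [sigmak_eq]
      exact ArithmeticFunction.isMultiplicative_sigma.map_mul_of_coprime hcop
    by_cases hdm : q ∣ sigmak k m
    · have h1 : q ∣ sigmak k (m * n) := hσ ▸ hdm.mul_right _
      simp [hf, h1, hdm]
    by_cases hdn : q ∣ sigmak k n
    · have h1 : q ∣ sigmak k (m * n) := hσ ▸ hdn.mul_left _
      simp [hf, h1, hdn]
    · have hmn : ¬ q ∣ sigmak k (m * n) := by
        rw [hσ, hq.dvd_mul]; tauto
      simp only [hf]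
      rw [if_pos ⟨Nat.mul_pos hm hn, hmn⟩, if_pos ⟨hm, hdm⟩, if_pos ⟨hn, hdn⟩]
      exact map_mul (riemannZetaSummandHom hs0) m n
  have hnorm : Summable (fun n => ‖f n‖) := by
    refine Summable.of_nonneg_of_le (fun n => norm_nonneg _) (fun n => ?_)
      (summable_riemannZetaSummand hs)
    simp only [hf]
    split
    · exact le_rfl
    · simpa using norm_nonneg _
  have hnormlt : ∀ p : ℕ, p.Prime → ‖(p : ℂ) ^ (-s)‖ < 1 := by
    intro p hp
    rw [Complex.norm_natCast_cpow_of_pos hp.pos]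
    apply Real.rpow_lt_one_of_one_lt_of_neg (by exact_mod_cast hp.one_lt)
    rw [neg_re]; linarith
  have hFq : ∑' e : ℕ, f (q ^ e) = (1 - (q : ℂ) ^ (-s))⁻¹ := by
    have hq_pow : ∀ e : ℕ, f (q ^ e) = ((q : ℂ) ^ (-s)) ^ e := by
      intro e
      simp only [hf]
      rw [if_pos ⟨pow_pos hq.pos e, not_dvd_sigmak_self_pow hq hk e⟩]
      exact map_pow (riemannZetaSummandHom hs0) q e
    rw [tsum_congr hq_pow, tsum_geometric_of_norm_lt_one (hnormlt q hq)]
  have hFp : ∀ p : ℕ, p.Prime → p ≠ q → ∑' e : ℕ, f (p ^ e) = Tfactor q r s p := by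
    intro p hp hne
    have hy := hnormlt p hp
    have hμ2 : 2 ≤ mup q r p := two_le_mup hq hq_odd hk hp hne
    have hfe : ∀ e : ℕ, f (p ^ e) =
        if mup q r p ∣ e + 1 then (0 : ℂ) else ((p : ℂ) ^ (-s)) ^ e := by
      intro e
      simp only [hf]
      by_cases hd : q ∣ sigmak k (p ^ e)
      · rw [if_neg (fun h => h.2 hd), if_pos ((dvd_sigmak_prime_pow_iff hq hk hp hne e).mp hd)]
      · rw [if_pos ⟨pow_pos hp.pos e, hd⟩,
          if_neg (fun hdd => hd ((dvd_sigmak_prime_pow_iff hq hk hp hne e).mpr hdd))]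
        exact map_pow (riemannZetaSummandHom hs0) p e
    rw [tsum_congr hfe, (local_factor_sum hy hμ2).2]
    rw [Tfactor, if_neg hne]
    have e1 : (p : ℂ) ^ (-(((mup q r p - 1 : ℕ) : ℂ) * s)) = ((p : ℂ) ^ (-s)) ^ (mup q r p - 1) := by
      rw [show -(((mup q r p - 1 : ℕ) : ℂ) * s) = ((mup q r p - 1 : ℕ) : ℂ) * (-s) by ring,
        Complex.cpow_nat_mul]
    have e2 : (p : ℂ) ^ (-((mup q r p : ℕ) * s : ℂ)) = ((p : ℂ) ^ (-s)) ^ (mup q r p) := by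
      rw [show -((mup q r p : ℕ) * s : ℂ) = ((mup q r p : ℕ) : ℂ) * (-s) by ring,
        Complex.cpow_nat_mul]
    rw [e1, e2]
  have hP : HasProd (fun p : Nat.Primes => ∑' e : ℕ, f ((p : ℕ) ^ e)) (∑' n, f n) :=
    EulerProduct.eulerProduct_hasProd hf1 hmul hnorm hf0
  have hx1 : 1 - (q : ℂ) ^ (-s) ≠ 0 := Complex.one_sub_prime_cpow_ne_zero hq hs
  have hD : HasProd (fun p : Nat.Primes => if (p : ℕ) = q then (1 - (q : ℂ) ^ (-s)) else 1)
      (1 - (q : ℂ) ^ (-s)) := by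
    have h := hasProd_single (f := fun p : Nat.Primes =>
      if (p : ℕ) = q then (1 - (q : ℂ) ^ (-s)) else 1) ⟨q, hq⟩ ?_
    · simpa using h
    · intro p hp
      have : (p : ℕ) ≠ q := fun h => hp (Subtype.ext h)
      simp [this]
  have hGF : (fun p : Nat.Primes => Tfactor q r s (p : ℕ))
      = fun p : Nat.Primes => (∑' e : ℕ, f ((p : ℕ) ^ e)) *
          (if (p : ℕ) = q then (1 - (q : ℂ) ^ (-s)) else 1) := by
    funext p
    by_cases hpq : (p : ℕ) = q
    · rw [if_pos hpq, Tfactor, if_pos hpq, hpq, hFq, inv_mul_cancel₀ hx1]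
    · rw [if_neg hpq, mul_one, hFp (p : ℕ) p.prop hpq, Tfactor]
  have hG : HasProd (fun p : Nat.Primes => Tfactor q r s (p : ℕ))
      ((∑' n, f n) * (1 - (q : ℂ) ^ (-s))) := by
    rw [hGF]; exact hP.mul hD
  refine ⟨hnorm.of_norm, hG.multipliable, ?_⟩
  rw [hG.tprod_eq, mul_comm (∑' n, f n) (1 - (q : ℂ) ^ (-s)), ← mul_assoc,
    inv_mul_cancel₀ hx1, one_mul]
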